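/- Let X be a vector space with a complete invariant metric d satisfying d(λx, λy) ≤ λ d(x,y) for all λ ∈ [0,1) and all x,y ∈ X. A function f : [a,b] → X is Riemann integrable if and only if there exists x̄ ∈ X with the property: for every ε > 0 there exists a partition Δ_ε of [a,b] such that d(f(Δ), x̄) < ε for every tagged partition Δ of [a,b] that refines Δ_ε. -/

import Mathlib

set_option linter.unusedSectionVars false
set_option linter.unusedVariables false
set_option maxHeartbeats 1000000


open Set MeasureTheory

/-- A tagged partition of `[a,b]`: points `a = t 0 < t 1 < ⋯ < t n = b`
with tags `s i ∈ [t i, t (i+1)]`. -/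
structure TaggedPartition (a b : ℝ) where
  n : ℕ
  t : ℕ → ℝ
  s : ℕ → ℝ
  npos : 0 < n
  left : t 0 = a
  right : t n = b
  mono : ∀ i < n, t i < t (i + 1)
  tag_mem : ∀ i < n, s i ∈ Set.Icc (t i) (t (i + 1))

/-- The mesh of the partition is `< δ`. -/
def TaggedPartition.MeshLT {a b : ℝ} (P : TaggedPartition a b) (δ : ℝ) : Prop :=
  ∀ i < P.n, P.t (i + 1) - P.t i < δ

/-- The set of partition points of a tagged partition. -/
def TaggedPartition.points {a b : ℝ} (P : TaggedPartition a b) : Set ℝ :=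
  {x | ∃ i ≤ P.n, P.t i = x}

/-- The Riemann sum `f(Δ) = Σᵢ (tᵢ₊₁ - tᵢ) • f(sᵢ)`. -/
def riemannSum {X : Type*} [AddCommGroup X] [Module ℝ X]
    (f : ℝ → X) {a b : ℝ} (P : TaggedPartition a b) : X :=
  ∑ i ∈ Finset.range P.n, (P.t (i + 1) - P.t i) • f (P.s i)

/-- `f` has Riemann integral `x` on `[a,b]` (mesh-based definition, metric `dist`). -/
def HasRiemannIntegral {X : Type*} [MetricSpace X] [AddCommGroup X] [Module ℝ X]
    (f : ℝ → X) (a b : ℝ) (x : X) : Prop :=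
  ∀ ε > 0, ∃ δ > 0, ∀ P : TaggedPartition a b, P.MeshLT δ →
    dist (riemannSum f P) x < ε


namespace TaggedPartition
variable {a b : ℝ} (P : TaggedPartition a b)

lemma t_mono : ∀ i j, i < j → j ≤ P.n → P.t i < P.t j := by
  intro i j hij hjn
  induction j with
  | zero => omega
  | succ k ih =>
    rcases Nat.lt_succ_iff_lt_or_eq.mp hij with h | h
    · exact lt_trans (ih h (by omega)) (P.mono k (by omega))
    · subst h; exact P.mono i (by omega)

lemma t_mono_le {i j : ℕ} (hij : i ≤ j) (hjn : j ≤ P.n) : P.t i ≤ P.t j := by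
  rcases eq_or_lt_of_le hij with h | h
  · subst h; exact le_refl _
  · exact (P.t_mono i j h hjn).le

lemma t_mem {i : ℕ} (hi : i ≤ P.n) : P.t i ∈ Icc a b := by
  constructor
  · have h := P.t_mono_le (Nat.zero_le i) hi; rwa [P.left] at h
  · have h := P.t_mono_le hi le_rfl; rwa [P.right] at h

lemma tag_mem_Icc {i : ℕ} (hi : i < P.n) : P.s i ∈ Icc a b := by
  obtain ⟨h1, h2⟩ := P.tag_mem i hi
  constructor
  · exact le_trans (P.t_mem (by omega : i ≤ P.n)).1 h1
  · exact le_trans h2 (P.t_mem (by omega : i + 1 ≤ P.n)).2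

/-- index lt from value lt -/
lemma index_lt_of_t_lt {i j : ℕ} (hi : i ≤ P.n) (hj : j ≤ P.n)
    (h : P.t i < P.t j) : i < j := by
  by_contra hc
  push_neg at hc
  exact absurd (P.t_mono_le hc hi) (not_le.mpr h)

/-- Every point of `[a,b]` lies in some subinterval. -/
lemma cover {x : ℝ} (hx : x ∈ Icc a b) : ∃ i < P.n, x ∈ Icc (P.t i) (P.t (i + 1)) := by
  classical
  have hn := P.npos
  set i := Nat.findGreatest (fun i => P.t i ≤ x) (P.n - 1) with hi
  have h0 : P.t 0 ≤ x := by rw [P.left]; exact hx.1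
  have hspec : P.t i ≤ x := Nat.findGreatest_spec (P := fun i => P.t i ≤ x) (Nat.zero_le _) h0
  have hile : i ≤ P.n - 1 := Nat.findGreatest_le _
  refine ⟨i, by omega, hspec, ?_⟩
  by_cases h : i = P.n - 1
  · have : i + 1 = P.n := by omega
    rw [this, P.right]; exact hx.2
  · have h1 : ¬ (P.t (i + 1) ≤ x) :=
      Nat.findGreatest_is_greatest (Nat.lt_succ_self i) (by omega)
    linarith [not_le.mp h1]

end TaggedPartition

/-- A uniform partition of mesh < δ exists. -/
lemma exists_partition_meshLT {a b : ℝ} (hab : a < b) {δ : ℝ} (hδ : 0 < δ) :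
    ∃ P : TaggedPartition a b, P.MeshLT δ := by
  obtain ⟨n, hn⟩ : ∃ n : ℕ, (b - a) / δ < n := exists_nat_gt _
  have hn0 : 0 < n := by
    rcases Nat.eq_zero_or_pos n with h | h
    · exfalso
      rw [h] at hn
      have : (0:ℝ) < (b - a) / δ := div_pos (by linarith) hδ
      simp at hn
      linarith
    · exact h
  have hnr : (0:ℝ) < n := by exact_mod_cast hn0
  set h : ℝ := (b - a) / n with hh
  have hpos : 0 < h := div_pos (by linarith) hnr
  have hstep : ∀ i : ℕ, a + (↑(i+1):ℝ) * h = a + ↑i * h + h := by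
    intro i; push_cast; ring
  refine ⟨⟨n, fun i => a + i * h, fun i => a + i * h, hn0, by simp, ?_, ?_, ?_⟩, ?_⟩
  · show a + n * h = b
    rw [hh]; field_simp; ring
  · intro i _
    show a + i * h < a + (↑(i+1):ℝ) * h
    rw [hstep]; linarith
  · intro i _
    refine ⟨le_refl _, ?_⟩
    show a + (i:ℝ) * h ≤ a + (↑(i+1):ℝ) * h
    rw [hstep]; linarith
  · intro i _
    show a + (↑(i+1):ℝ) * h - (a + i * h) < δ
    rw [hstep]
    have : a + ↑i * h + h - (a + ↑i * h) = h := by ring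
    rw [this, hh, div_lt_iff₀ hnr]
    calc b - a = ((b-a)/δ) * δ := by field_simp
      _ < n * δ := mul_lt_mul_of_pos_right hn hδ
      _ = δ * n := by ring

/-- refinement has smaller mesh -/
lemma mesh_of_refine {a b : ℝ} {P Q : TaggedPartition a b} {δ : ℝ}
    (hP : P.MeshLT δ) (hPQ : P.points ⊆ Q.points) : Q.MeshLT δ := by
  classical
  intro i hi
  -- largest j with P.t j ≤ Q.t i
  set j := Nat.findGreatest (fun j => P.t j ≤ Q.t i) P.n with hj
  have h0 : P.t 0 ≤ Q.t i := by
    rw [P.left]; exact (Q.t_mem (by omega : i ≤ Q.n)).1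
  have hspec : P.t j ≤ Q.t i := Nat.findGreatest_spec (P := fun j => P.t j ≤ Q.t i) (Nat.zero_le _) h0
  have hjle : j ≤ P.n := Nat.findGreatest_le _
  have hjlt : j < P.n := by
    rcases eq_or_lt_of_le hjle with h | h
    · exfalso
      have : P.t j = b := by rw [h, P.right]
      have hb : Q.t i < b := by
        calc Q.t i < Q.t (i+1) := Q.mono i hi
          _ ≤ b := (Q.t_mem (by omega : i + 1 ≤ Q.n)).2
      linarith
    · exact h
  -- P.t (j+1) is a point of Q, and > Q.t i, so ≥ Q.t (i+1)
  have hgt : Q.t i < P.t (j + 1) := by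
    have := Nat.findGreatest_is_greatest (Nat.lt_succ_self j) (by omega : j + 1 ≤ P.n)
    exact not_le.mp this
  obtain ⟨m, hm, hmv⟩ := hPQ ⟨j + 1, by omega, rfl⟩
  have him : i < m := Q.index_lt_of_t_lt (by omega) hm (by rw [hmv]; exact hgt)
  have : Q.t (i + 1) ≤ P.t (j + 1) := by
    rw [← hmv]; exact Q.t_mono_le him hm
  calc Q.t (i + 1) - Q.t i ≤ P.t (j + 1) - P.t j := by linarith
    _ < δ := hP j hjlt

section
variable {X : Type*} [MetricSpace X] [AddCommGroup X] [Module ℝ X]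
variable (hinv : ∀ x y z : X, dist (x + z) (y + z) = dist x y)
variable (hscale : ∀ l : ℝ, 0 ≤ l → l < 1 → ∀ x y : X, dist (l • x) (l • y) ≤ l * dist x y)
include hinv

lemma dist_eq_F (x y : X) : dist x y = dist (x - y) 0 := by
  have := hinv (x - y) 0 y
  simpa using this

lemma F_neg (x : X) : dist (-x) 0 = dist x 0 := by
  have h := hinv 0 x (-x)
  simp only [zero_add, add_neg_cancel] at h
  rw [h, dist_comm]

lemma F_add (x y : X) : dist (x + y) 0 ≤ dist x 0 + dist y 0 := by
  have h1 : dist (x + y) y = dist x 0 := by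
    have := hinv x 0 y; simpa using this
  calc dist (x + y) 0 ≤ dist (x + y) y + dist y 0 := dist_triangle _ _ _
    _ = dist x 0 + dist y 0 := by rw [h1]

lemma F_nsmul (n : ℕ) (x : X) : dist ((n : ℝ) • x) 0 ≤ n * dist x 0 := by
  induction n with
  | zero => simp
  | succ k ih =>
    have : ((k + 1 : ℕ) : ℝ) • x = (k : ℝ) • x + x := by
      push_cast; rw [add_smul, one_smul]
    rw [this]
    calc dist ((k : ℝ) • x + x) 0 ≤ dist ((k : ℝ) • x) 0 + dist x 0 := F_add hinv _ _
      _ ≤ k * dist x 0 + dist x 0 := by linarith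
      _ = ((k + 1 : ℕ) : ℝ) * dist x 0 := by push_cast; ring

include hscale in
lemma F_smul (l : ℝ) (hl : 0 ≤ l) (x : X) : dist (l • x) 0 ≤ l * dist x 0 := by
  obtain ⟨n, hn⟩ : ∃ n : ℕ, l < n := exists_nat_gt l
  have hn0 : (0 : ℝ) < n := lt_of_le_of_lt hl hn
  have key : l • x = (n : ℝ) • ((l / n) • x) := by
    rw [smul_smul]; congr 1; field_simp
  rw [key]
  calc dist ((n : ℝ) • ((l / n) • x)) 0 ≤ n * dist ((l / n) • x) 0 := F_nsmul hinv _ _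
    _ ≤ n * ((l / n) * dist x 0) := by
        have hln : l / n < 1 := (div_lt_one hn0).mpr hn
        have hln0 : 0 ≤ l / n := div_nonneg hl hn0.le
        have := hscale (l / n) hln0 hln x 0
        rw [smul_zero] at this
        exact mul_le_mul_of_nonneg_left this hn0.le
    _ = l * dist x 0 := by field_simp

include hscale in
lemma F_smul_inv (l : ℝ) (hl : 0 < l) (x : X) :
    dist x 0 ≤ (1 / l) * dist (l • x) 0 := by
  have : x = (1 / l) • (l • x) := by rw [smul_smul]; field_simp; rw [one_smul]
  calc dist x 0 = dist ((1 / l) • (l • x)) 0 := by rw [← this]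
    _ ≤ (1 / l) * dist (l • x) 0 := F_smul hinv hscale _ (by positivity) _

lemma F_sum {ι : Type*} (s : Finset ι) (g : ι → X) :
    dist (∑ i ∈ s, g i) 0 ≤ ∑ i ∈ s, dist (g i) 0 := by
  induction s using Finset.cons_induction with
  | empty => simp
  | cons i s hi ih =>
    rw [Finset.sum_cons, Finset.sum_cons]
    calc dist (g i + ∑ j ∈ s, g j) 0 ≤ dist (g i) 0 + dist (∑ j ∈ s, g j) 0 := F_add hinv _ _
      _ ≤ _ := by linarith

end
section PartC
open Set
variable {X : Type*} [MetricSpace X] [AddCommGroup X] [Module ℝ X]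

/-- Swap the tag of interval `j` to `x`. -/
def TaggedPartition.swapTag {a b : ℝ} (P : TaggedPartition a b) (j : ℕ) (x : ℝ)
    (hx : x ∈ Icc (P.t j) (P.t (j + 1))) : TaggedPartition a b where
  n := P.n
  t := P.t
  s := fun k => if k = j then x else P.s k
  npos := P.npos
  left := P.left
  right := P.right
  mono := P.mono
  tag_mem := by
    intro k hk
    by_cases h : k = j
    · subst h; simpa using hx
    · simpa [h] using P.tag_mem k hk

lemma swapTag_points {a b : ℝ} (P : TaggedPartition a b) (j : ℕ) (x : ℝ)
    (hx : x ∈ Icc (P.t j) (P.t (j + 1))) : (P.swapTag j x hx).points = P.points := rfl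

lemma riemannSum_swapTag_sub {a b : ℝ} (f : ℝ → X) (P : TaggedPartition a b) (j : ℕ)
    (hj : j < P.n) (x : ℝ) (hx : x ∈ Icc (P.t j) (P.t (j + 1))) :
    riemannSum f (P.swapTag j x hx) - riemannSum f P
      = (P.t (j + 1) - P.t j) • (f x - f (P.s j)) := by
  unfold riemannSum TaggedPartition.swapTag
  simp only
  rw [← Finset.sum_sub_distrib]
  rw [Finset.sum_eq_single j]
  · simp [smul_sub]
  · intro k hk hkj
    simp [hkj]
  · intro h
    exact absurd (Finset.mem_range.mpr hj) h

/-- Boundedness of `f` from the refinement criterion. -/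
lemma exists_bound
    (hinv : ∀ x y z : X, dist (x + z) (y + z) = dist x y)
    (hscale : ∀ l : ℝ, 0 ≤ l → l < 1 → ∀ x y : X, dist (l • x) (l • y) ≤ l * dist x y)
    {a b : ℝ} (f : ℝ → X) (xbar : X) (P₁ : TaggedPartition a b)
    (href : ∀ P : TaggedPartition a b, P₁.points ⊆ P.points →
      dist (riemannSum f P) xbar < 1) :
    ∃ M : ℝ, 0 ≤ M ∧ ∀ x ∈ Icc a b, dist (f x) 0 ≤ M := by
  have hne : (Finset.range P₁.n).Nonempty := ⟨0, Finset.mem_range.mpr P₁.npos⟩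
  set M := (Finset.range P₁.n).sup' hne
    (fun j => 2 / (P₁.t (j + 1) - P₁.t j) + dist (f (P₁.s j)) 0) with hM
  have hM0 : 0 ≤ M := by
    have h0 : (0:ℕ) ∈ Finset.range P₁.n := Finset.mem_range.mpr P₁.npos
    have hlen : 0 < P₁.t 1 - P₁.t 0 := by
      have := P₁.mono 0 P₁.npos; linarith
    have hle := Finset.le_sup'
      (f := fun j => 2 / (P₁.t (j + 1) - P₁.t j) + dist (f (P₁.s j)) 0) h0
    have h2 : 0 < 2 / (P₁.t 1 - P₁.t 0) := by positivity
    have h3 := dist_nonneg (x := f (P₁.s 0)) (y := 0)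
    have h4 : (0:ℕ) + 1 = 1 := rfl
    rw [h4] at hle
    linarith
  refine ⟨M, hM0, ?_⟩
  intro x hx
  obtain ⟨j, hj, hxj⟩ := P₁.cover hx
  have hlen : 0 < P₁.t (j + 1) - P₁.t j := by have := P₁.mono j hj; linarith
  -- tag-swapped partition
  have h1 := href (P₁.swapTag j x hxj) (by rw [swapTag_points])
  have h2 := href P₁ (subset_refl _)
  have hd : dist (riemannSum f (P₁.swapTag j x hxj)) (riemannSum f P₁) < 2 := by
    calc dist (riemannSum f (P₁.swapTag j x hxj)) (riemannSum f P₁)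
        ≤ dist (riemannSum f (P₁.swapTag j x hxj)) xbar + dist xbar (riemannSum f P₁) :=
          dist_triangle _ _ _
      _ < 2 := by rw [dist_comm xbar]; linarith
  rw [dist_eq_F hinv, riemannSum_swapTag_sub f P₁ j hj x hxj] at hd
  have hF : dist (f x - f (P₁.s j)) 0 ≤ 2 / (P₁.t (j + 1) - P₁.t j) := by
    have := F_smul_inv hinv hscale (P₁.t (j + 1) - P₁.t j) hlen (f x - f (P₁.s j))
    calc dist (f x - f (P₁.s j)) 0
        ≤ (1 / (P₁.t (j + 1) - P₁.t j)) *
          dist ((P₁.t (j + 1) - P₁.t j) • (f x - f (P₁.s j))) 0 := this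
      _ ≤ (1 / (P₁.t (j + 1) - P₁.t j)) * 2 := by
          apply mul_le_mul_of_nonneg_left hd.le (by positivity)
      _ = 2 / (P₁.t (j + 1) - P₁.t j) := by ring
  have hfx : dist (f x) 0 ≤ 2 / (P₁.t (j + 1) - P₁.t j) + dist (f (P₁.s j)) 0 := by
    have h3 : f x = (f x - f (P₁.s j)) + f (P₁.s j) := by abel
    calc dist (f x) 0 = dist ((f x - f (P₁.s j)) + f (P₁.s j)) 0 := by rw [← h3]
      _ ≤ dist (f x - f (P₁.s j)) 0 + dist (f (P₁.s j)) 0 := F_add hinv _ _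
      _ ≤ _ := by linarith
  calc dist (f x) 0 ≤ 2 / (P₁.t (j + 1) - P₁.t j) + dist (f (P₁.s j)) 0 := hfx
    _ ≤ M := Finset.le_sup'
      (f := fun j => 2 / (P₁.t (j + 1) - P₁.t j) + dist (f (P₁.s j)) 0)
      (Finset.mem_range.mpr hj)

end PartC
section PartD
open Set
variable {X : Type*} [MetricSpace X] [AddCommGroup X] [Module ℝ X]

lemma insert_point
    (hinv : ∀ x y z : X, dist (x + z) (y + z) = dist x y)
    (hscale : ∀ l : ℝ, 0 ≤ l → l < 1 → ∀ x y : X, dist (l • x) (l • y) ≤ l * dist x y)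
    {a b : ℝ} (f : ℝ → X) {M δ : ℝ} (hM0 : 0 ≤ M)
    (hM : ∀ x ∈ Set.Icc a b, dist (f x) 0 ≤ M) (hδ : 0 < δ)
    (P : TaggedPartition a b) (hmesh : P.MeshLT δ) (c : ℝ) (hc : c ∈ Set.Icc a b) :
    ∃ Q : TaggedPartition a b, Q.MeshLT δ ∧ P.points ⊆ Q.points ∧ c ∈ Q.points ∧
      dist (riemannSum f Q) (riemannSum f P) ≤ 2 * M * δ := by
  by_cases hcp : c ∈ P.points
  · exact ⟨P, hmesh, subset_refl _, hcp, by
      rw [dist_self]; positivity⟩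
  obtain ⟨i, hi, hci⟩ := P.cover hc
  have hlt1 : P.t i < c := by
    rcases eq_or_lt_of_le hci.1 with h | h
    · exact absurd ⟨i, by omega, h⟩ hcp
    · exact h
  have hlt2 : c < P.t (i + 1) := by
    rcases eq_or_lt_of_le hci.2 with h | h
    · exact absurd ⟨i + 1, by omega, h.symm⟩ hcp
    · exact h
  have hsi := P.tag_mem i hi
  set t' : ℕ → ℝ := fun j => if j ≤ i then P.t j else if j = i + 1 then c else P.t (j - 1)
    with ht'def
  set s' : ℕ → ℝ := fun j =>
    if j < i then P.s j else if j = i then min (P.s i) c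
    else if j = i + 1 then max (P.s i) c else P.s (j - 1) with hs'def
  have ht1 : ∀ j, j ≤ i → t' j = P.t j := by
    intro j hj; simp only [ht'def]; rw [if_pos hj]
  have ht2 : t' (i + 1) = c := by
    simp only [ht'def]
    rw [if_neg (by omega : ¬ (i + 1 ≤ i))]
    simp
  have ht3 : ∀ j, i + 2 ≤ j → t' j = P.t (j - 1) := by
    intro j hj; simp only [ht'def]; rw [if_neg (by omega), if_neg (by omega)]
  have hs1 : ∀ j, j < i → s' j = P.s j := by
    intro j hj; simp only [hs'def]; rw [if_pos hj]
  have hs2 : s' i = min (P.s i) c := by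
    simp only [hs'def]
    rw [if_neg (by omega : ¬ (i < i))]
    simp
  have hs3 : s' (i + 1) = max (P.s i) c := by
    simp only [hs'def]
    rw [if_neg (by omega : ¬ (i + 1 < i)), if_neg (by omega : ¬ (i + 1 = i))]
    simp
  have hs4 : ∀ j, i + 2 ≤ j → s' j = P.s (j - 1) := by
    intro j hj; simp only [hs'def]
    rw [if_neg (by omega), if_neg (by omega), if_neg (by omega)]
  have hmono : ∀ j < P.n + 1, t' j < t' (j + 1) := by
    intro j hj
    rcases lt_trichotomy j i with h | h | h
    · rw [ht1 j (by omega), ht1 (j + 1) (by omega)]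
      exact P.mono j (by omega)
    · subst h; rw [ht1 j le_rfl, ht2]; exact hlt1
    · rcases Nat.lt_or_ge j (i + 2) with h2 | h2
      · have hj1 : j = i + 1 := by omega
        subst hj1
        rw [ht2, ht3 (i + 1 + 1) (by omega)]
        have : i + 1 + 1 - 1 = i + 1 := by omega
        rw [this]; exact hlt2
      · rw [ht3 j (by omega), ht3 (j + 1) (by omega)]
        have e1 : j + 1 - 1 = (j - 1) + 1 := by omega
        rw [e1]
        exact P.mono (j - 1) (by omega)
  refine ⟨⟨P.n + 1, t', s', by omega, ?_, ?_, hmono, ?_⟩, ?_, ?_, ?_, ?_⟩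
  · rw [ht1 0 (by omega)]; exact P.left
  · rw [ht3 (P.n + 1) (by omega)]
    have : P.n + 1 - 1 = P.n := by omega
    rw [this]; exact P.right
  · -- tag_mem
    intro j hj
    rcases lt_trichotomy j i with h | h | h
    · rw [hs1 j h, ht1 j (by omega), ht1 (j + 1) (by omega)]
      exact P.tag_mem j (by omega)
    · subst h
      rw [hs2, ht1 j le_rfl, ht2]
      exact ⟨le_min hsi.1 hlt1.le, min_le_right _ _⟩
    · rcases Nat.lt_or_ge j (i + 2) with h2 | h2
      · have hj1 : j = i + 1 := by omega
        subst hj1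
        rw [hs3, ht2, ht3 (i + 1 + 1) (by omega)]
        have : i + 1 + 1 - 1 = i + 1 := by omega
        rw [this]
        exact ⟨le_max_right _ _, max_le hsi.2 hlt2.le⟩
      · rw [hs4 j (by omega), ht3 j (by omega), ht3 (j + 1) (by omega)]
        have e1 : j + 1 - 1 = (j - 1) + 1 := by omega
        rw [e1]
        exact P.tag_mem (j - 1) (by omega)
  · -- MeshLT
    intro j hj
    simp only at hj ⊢
    rcases lt_trichotomy j i with h | h | h
    · rw [ht1 j (by omega), ht1 (j + 1) (by omega)]
      exact hmesh j (by omega)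
    · subst h
      rw [ht1 j le_rfl, ht2]
      have := hmesh j (by omega)
      linarith
    · rcases Nat.lt_or_ge j (i + 2) with h2 | h2
      · have hj1 : j = i + 1 := by omega
        subst hj1
        rw [ht2, ht3 (i + 1 + 1) (by omega)]
        have : i + 1 + 1 - 1 = i + 1 := by omega
        rw [this]
        have := hmesh i (by omega)
        linarith
      · rw [ht3 j (by omega), ht3 (j + 1) (by omega)]
        have e1 : j + 1 - 1 = (j - 1) + 1 := by omega
        rw [e1]
        exact hmesh (j - 1) (by omega)
  · -- P.points ⊆ Q.points
    rintro x ⟨k, hk, rfl⟩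
    by_cases h : k ≤ i
    · exact ⟨k, by show k ≤ P.n + 1; omega, ht1 k h⟩
    · refine ⟨k + 1, by show k + 1 ≤ P.n + 1; omega, ?_⟩
      show t' (k + 1) = P.t k
      rw [ht3 (k + 1) (by omega)]
      norm_num
  · -- c ∈ Q.points
    exact ⟨i + 1, by show i + 1 ≤ P.n + 1; omega, ht2⟩
  · -- distance bound
    set g : ℕ → X := fun j => (t' (j + 1) - t' j) • f (s' j) with hg
    set h : ℕ → X := fun j => (P.t (j + 1) - P.t j) • f (P.s j) with hh
    show dist (∑ j ∈ Finset.range (P.n + 1), g j) (∑ j ∈ Finset.range P.n, h j) ≤ 2 * M * δ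
    -- split sums
    have split1 : ∑ j ∈ Finset.range (P.n + 1), g j
        = (∑ j ∈ Finset.Ico 0 i, g j) + (g i + g (i + 1))
          + ∑ j ∈ Finset.Ico (i + 2) (P.n + 1), g j := by
      rw [Finset.range_eq_Ico]
      rw [← Finset.sum_Ico_consecutive g (by omega : 0 ≤ i) (by omega : i ≤ P.n + 1)]
      rw [← Finset.sum_Ico_consecutive (fun j => g j) (by omega : i ≤ i + 2)
        (by omega : i + 2 ≤ P.n + 1)]
      have : ∑ j ∈ Finset.Ico i (i + 2), g j = g i + g (i + 1) := by
        rw [Finset.sum_Ico_succ_top (by omega), Finset.sum_Ico_succ_top (by omega)]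
        simp
      rw [this]; ring_nf
      abel
    have split2 : ∑ j ∈ Finset.range P.n, h j
        = (∑ j ∈ Finset.Ico 0 i, h j) + h i + ∑ j ∈ Finset.Ico (i + 1) P.n, h j := by
      rw [Finset.range_eq_Ico]
      rw [← Finset.sum_Ico_consecutive h (by omega : 0 ≤ i) (by omega : i ≤ P.n)]
      rw [← Finset.sum_Ico_consecutive (fun j => h j) (by omega : i ≤ i + 1)
        (by omega : i + 1 ≤ P.n)]
      have : ∑ j ∈ Finset.Ico i (i + 1), h j = h i := by
        rw [Finset.sum_Ico_succ_top (by omega)]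
        simp
      rw [this]; abel
    have head_eq : ∑ j ∈ Finset.Ico 0 i, g j = ∑ j ∈ Finset.Ico 0 i, h j := by
      apply Finset.sum_congr rfl
      intro j hj
      rw [Finset.mem_Ico] at hj
      simp only [hg, hh]
      rw [ht1 j (by omega), ht1 (j + 1) (by omega), hs1 j (by omega)]
    have tail_eq : ∑ j ∈ Finset.Ico (i + 2) (P.n + 1), g j
        = ∑ j ∈ Finset.Ico (i + 1) P.n, h j := by
      have hmap : Finset.Ico (i + 2) (P.n + 1)
          = (Finset.Ico (i + 1) P.n).map (addRightEmbedding 1) := by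
        rw [Finset.map_add_right_Ico]
      rw [hmap, Finset.sum_map]
      apply Finset.sum_congr rfl
      intro j hj
      rw [Finset.mem_Ico] at hj
      simp only [addRightEmbedding_apply, hg, hh]
      rw [ht3 (j + 1 + 1) (by omega), ht3 (j + 1) (by omega), hs4 (j + 1) (by omega)]
      have e1 : j + 1 + 1 - 1 = j + 1 := by omega
      have e2 : j + 1 - 1 = j := by omega
      rw [e1, e2]
    -- now compute difference
    have hdiff : (∑ j ∈ Finset.range (P.n + 1), g j) - ∑ j ∈ Finset.range P.n, h j
        = g i + g (i + 1) - h i := by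
      rw [split1, split2, head_eq, tail_eq]; abel
    rw [dist_eq_F hinv, hdiff]
    have hgi : g i = (c - P.t i) • f (min (P.s i) c) := by
      simp only [hg]; rw [ht1 i le_rfl, ht2, hs2]
    have hgi1 : g (i + 1) = (P.t (i + 1) - c) • f (max (P.s i) c) := by
      simp only [hg]
      rw [ht2, ht3 (i + 2) (by omega), hs3]
      have : i + 2 - 1 = i + 1 := by omega
      rw [this]
    have hmin : min (P.s i) c ∈ Icc a b := by
      constructor
      · exact le_min (P.tag_mem_Icc hi).1 hc.1
      · exact le_trans (min_le_right _ _) hc.2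
    have hmax : max (P.s i) c ∈ Icc a b := by
      constructor
      · exact le_trans hc.1 (le_max_right _ _)
      · exact max_le (P.tag_mem_Icc hi).2 hc.2
    have b1 : dist (g i) 0 ≤ (c - P.t i) * M := by
      rw [hgi]
      calc dist ((c - P.t i) • f (min (P.s i) c)) 0
          ≤ (c - P.t i) * dist (f (min (P.s i) c)) 0 :=
            F_smul hinv hscale _ (by linarith) _
        _ ≤ (c - P.t i) * M := by
            apply mul_le_mul_of_nonneg_left (hM _ hmin) (by linarith)
    have b2 : dist (g (i + 1)) 0 ≤ (P.t (i + 1) - c) * M := by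
      rw [hgi1]
      calc dist ((P.t (i + 1) - c) • f (max (P.s i) c)) 0
          ≤ (P.t (i + 1) - c) * dist (f (max (P.s i) c)) 0 :=
            F_smul hinv hscale _ (by linarith) _
        _ ≤ (P.t (i + 1) - c) * M := by
            apply mul_le_mul_of_nonneg_left (hM _ hmax) (by linarith)
    have b3 : dist (h i) 0 ≤ (P.t (i + 1) - P.t i) * M := by
      simp only [hh]
      have hlen : 0 ≤ P.t (i + 1) - P.t i := by linarith
      calc dist ((P.t (i + 1) - P.t i) • f (P.s i)) 0
          ≤ (P.t (i + 1) - P.t i) * dist (f (P.s i)) 0 :=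
            F_smul hinv hscale _ hlen _
        _ ≤ (P.t (i + 1) - P.t i) * M := by
            apply mul_le_mul_of_nonneg_left (hM _ (P.tag_mem_Icc hi)) hlen
    have hFd : dist (g i + g (i + 1) - h i) 0
        ≤ dist (g i) 0 + dist (g (i + 1)) 0 + dist (h i) 0 := by
      have e : g i + g (i + 1) - h i = g i + (g (i + 1) + -(h i)) := by abel
      rw [e]
      calc dist (g i + (g (i + 1) + -(h i))) 0
          ≤ dist (g i) 0 + dist (g (i + 1) + -(h i)) 0 := F_add hinv _ _
        _ ≤ dist (g i) 0 + (dist (g (i + 1)) 0 + dist (-(h i)) 0) := by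
            have := F_add hinv (g (i + 1)) (-(h i)); linarith
        _ = dist (g i) 0 + dist (g (i + 1)) 0 + dist (h i) 0 := by
            rw [F_neg hinv]; ring
    have hmi := hmesh i hi
    calc dist (g i + g (i + 1) - h i) 0
        ≤ dist (g i) 0 + dist (g (i + 1)) 0 + dist (h i) 0 := hFd
      _ ≤ (c - P.t i) * M + (P.t (i + 1) - c) * M + (P.t (i + 1) - P.t i) * M := by
          linarith
      _ = 2 * (P.t (i + 1) - P.t i) * M := by ring
      _ ≤ 2 * M * δ := by nlinarith
end PartD
section PartE
open Set
variable {X : Type*} [MetricSpace X] [AddCommGroup X] [Module ℝ X]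

lemma insert_many
    (hinv : ∀ x y z : X, dist (x + z) (y + z) = dist x y)
    (hscale : ∀ l : ℝ, 0 ≤ l → l < 1 → ∀ x y : X, dist (l • x) (l • y) ≤ l * dist x y)
    {a b : ℝ} (f : ℝ → X) {M δ : ℝ} (hM0 : 0 ≤ M)
    (hM : ∀ x ∈ Set.Icc a b, dist (f x) 0 ≤ M) (hδ : 0 < δ)
    (P P₀ : TaggedPartition a b) (hmesh : P.MeshLT δ) (k : ℕ) :
    ∃ Q : TaggedPartition a b, Q.MeshLT δ ∧ P.points ⊆ Q.points ∧
      (∀ j, j < k → j ≤ P₀.n → P₀.t j ∈ Q.points) ∧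
      dist (riemannSum f Q) (riemannSum f P) ≤ k * (2 * M * δ) := by
  induction k with
  | zero =>
    exact ⟨P, hmesh, subset_refl _, fun j hj _ => absurd hj (by omega),
      by simp [dist_self]⟩
  | succ k ih =>
    obtain ⟨Q, hQm, hQP, hQpts, hQd⟩ := ih
    by_cases hk : k ≤ P₀.n
    · obtain ⟨Q', h1, h2, h3, h4⟩ :=
        insert_point hinv hscale f hM0 hM hδ Q hQm (P₀.t k) (P₀.t_mem hk)
      refine ⟨Q', h1, subset_trans hQP h2, ?_, ?_⟩
      · intro j hj hj2
        rcases Nat.lt_or_ge j k with h | h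
        · exact h2 (hQpts j h hj2)
        · have hjk : j = k := by omega
          subst hjk; exact h3
      · calc dist (riemannSum f Q') (riemannSum f P)
            ≤ dist (riemannSum f Q') (riemannSum f Q)
              + dist (riemannSum f Q) (riemannSum f P) := dist_triangle _ _ _
          _ ≤ 2 * M * δ + k * (2 * M * δ) := add_le_add h4 hQd
          _ = (k + 1 : ℕ) * (2 * M * δ) := by push_cast; ring
    · refine ⟨Q, hQm, hQP, ?_, ?_⟩
      · intro j hj hj2; exact hQpts j (by omega) hj2
      · calc dist (riemannSum f Q) (riemannSum f P) ≤ k * (2 * M * δ) := hQd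
          _ ≤ (k + 1 : ℕ) * (2 * M * δ) := by
              push_cast
              nlinarith [hδ.le, hM0]

end PartE

theorem riemannIntegrable_iff_refinement
    {X : Type*} [MetricSpace X] [AddCommGroup X] [Module ℝ X] [CompleteSpace X]
    (hinv : ∀ x y z : X, dist (x + z) (y + z) = dist x y)
    (hscale : ∀ l : ℝ, 0 ≤ l → l < 1 → ∀ x y : X, dist (l • x) (l • y) ≤ l * dist x y)
    (a b : ℝ) (hab : a < b) (f : ℝ → X) :
    (∃ x, HasRiemannIntegral f a b x) ↔
      ∃ xbar : X, ∀ ε > 0, ∃ P₀ : TaggedPartition a b,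
        ∀ P : TaggedPartition a b, P₀.points ⊆ P.points →
          dist (riemannSum f P) xbar < ε := by
  constructor
  · rintro ⟨x, hx⟩
    refine ⟨x, ?_⟩
    intro ε hε
    obtain ⟨δ, hδ, hP⟩ := hx ε hε
    obtain ⟨P₀, hP₀m⟩ := exists_partition_meshLT hab hδ
    exact ⟨P₀, fun P hsub => hP P (mesh_of_refine hP₀m hsub)⟩
  · rintro ⟨xbar, hcrit⟩
    refine ⟨xbar, ?_⟩
    -- boundedness
    obtain ⟨P₁, hP₁⟩ := hcrit 1 one_pos
    obtain ⟨M, hM0, hM⟩ := exists_bound hinv hscale f xbar P₁ hP₁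
    intro ε hε
    obtain ⟨P₀, hP₀⟩ := hcrit (ε / 2) (by positivity)
    set C : ℝ := 2 * M * ((P₀.n : ℝ) + 1) with hC
    have hC0 : 0 ≤ C := by positivity
    set δ : ℝ := ε / (2 * (C + 1)) with hδdef
    have hδ : 0 < δ := by positivity
    refine ⟨δ, hδ, ?_⟩
    intro P hPm
    obtain ⟨Q, hQm, hQP, hQpts, hQd⟩ :=
      insert_many hinv hscale f hM0 hM hδ P P₀ hPm (P₀.n + 1)
    have href : P₀.points ⊆ Q.points := by
      rintro x ⟨j, hj, rfl⟩
      exact hQpts j (by omega) hj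
    have h1 : dist (riemannSum f Q) xbar < ε / 2 := hP₀ Q href
    have h2 : dist (riemannSum f Q) (riemannSum f P) ≤ C * δ := by
      calc dist (riemannSum f Q) (riemannSum f P)
          ≤ (P₀.n + 1 : ℕ) * (2 * M * δ) := hQd
        _ = C * δ := by rw [hC]; push_cast; ring
    have h3 : C * δ < ε / 2 := by
      rw [hδdef]
      rw [mul_div_assoc']
      rw [div_lt_div_iff₀ (by positivity) (by norm_num)]
      nlinarith
    calc dist (riemannSum f P) xbar
        ≤ dist (riemannSum f P) (riemannSum f Q) + dist (riemannSum f Q) xbar :=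
          dist_triangle _ _ _
      _ < ε / 2 + ε / 2 := by
          rw [dist_comm]
          apply add_lt_add_of_le_of_lt (le_trans h2 h3.le) h1
      _ = ε := by ring
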